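/- arXiv:2405.14073 — 5 statements merged into one kernel-verified Lean document; each statement's English description precedes it below -/
import Mathlib

section
/- Let ι be a finite nonempty type, let p and q be positive probability vectors on ι, and let β > 0. Then ⨅ (r : ι → ℝ), ⨆ (p' : positive probability vector on ι), (∑ i, p' i * r i − ∑ i, p i * r i − β * ∑ i, p' i * Real.log (p' i / q i)) = −β * ∑ i, p i * Real.log (p i / q i). That is, the min–max value of the fine-tuning objective, minimized over all reward functions r and maximized over all fine-tuned trajectory distributions p', equals −β · KL(p ‖ q). (Core min–max identity of Theorem 1 for a fixed embodiment.) -/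
/-- Gibbs' inequality: the KL divergence between two positive probability
vectors is nonnegative. -/
lemma gibbs_nonneg {ι : Type*} [Fintype ι] (a b : ι → ℝ)
    (ha : ∀ i, 0 < a i) (hb : ∀ i, 0 < b i)
    (has : ∑ i, a i = 1) (hbs : ∑ i, b i = 1) :
    0 ≤ ∑ i, a i * Real.log (a i / b i) := by
  have key : ∀ i, a i - b i ≤ a i * Real.log (a i / b i) := by
    intro i
    have hlog : Real.log (b i / a i) ≤ b i / a i - 1 :=
      Real.log_le_sub_one_of_pos (div_pos (hb i) (ha i))
    have hrw : Real.log (a i / b i) = -Real.log (b i / a i) := by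
      rw [← Real.log_inv, inv_div]
    rw [hrw]
    have h1 : -(b i / a i - 1) ≤ -Real.log (b i / a i) := by linarith
    have h2 : a i * -(b i / a i - 1) ≤ a i * -Real.log (b i / a i) :=
      mul_le_mul_of_nonneg_left h1 (ha i).le
    have h3 : a i * -(b i / a i - 1) = a i - b i := by
      have : a i * (b i / a i) = b i := mul_div_cancel₀ _ (ha i).ne'
      nlinarith [this]
    linarith
  calc (0 : ℝ) = ∑ i, (a i - b i) := by rw [Finset.sum_sub_distrib, has, hbs]; ring
    _ ≤ ∑ i, a i * Real.log (a i / b i) := Finset.sum_le_sum fun i _ => key i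

/-- Core min–max identity of Theorem 1 for a fixed embodiment: the min over reward
functions of the max over positive probability vectors `p'` of the fine-tuning
objective equals `−β · KL(p‖q)`. -/
theorem minmax_finetune_eq_neg_KL {ι : Type*} [Fintype ι] [Nonempty ι]
    (p q : ι → ℝ) (hp : ∀ i, 0 < p i) (hps : ∑ i, p i = 1)
    (hq : ∀ i, 0 < q i) (hqs : ∑ i, q i = 1)
    (β : ℝ) (hβ : 0 < β) :
    (⨅ r : ι → ℝ, ⨆ p' : {f : ι → ℝ // (∀ i, 0 < f i) ∧ ∑ i, f i = 1},
      (∑ i, (p' : ι → ℝ) i * r i - ∑ i, p i * r i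
        - β * ∑ i, (p' : ι → ℝ) i * Real.log ((p' : ι → ℝ) i / q i)))
    = -β * ∑ i, p i * Real.log (p i / q i) := by
  set c : ℝ := -β * ∑ i, p i * Real.log (p i / q i) with hc
  set F : (ι → ℝ) → {f : ι → ℝ // (∀ i, 0 < f i) ∧ ∑ i, f i = 1} → ℝ :=
    fun r p' => ∑ i, (p' : ι → ℝ) i * r i - ∑ i, p i * r i
        - β * ∑ i, (p' : ι → ℝ) i * Real.log ((p' : ι → ℝ) i / q i) with hF
  -- For each r, the family p' ↦ F r p' is bounded above
  have hbdd : ∀ r : ι → ℝ, BddAbove (Set.range (F r)) := by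
    intro r
    refine ⟨∑ i, |r i| - ∑ i, p i * r i, ?_⟩
    rintro x ⟨⟨f, hf, hfs⟩, rfl⟩
    have h1 : ∑ i, f i * r i ≤ ∑ i, |r i| := by
      apply Finset.sum_le_sum
      intro i _
      have hfle1 : f i ≤ 1 := by
        rw [← hfs]
        exact Finset.single_le_sum (fun j _ => (hf j).le) (Finset.mem_univ i)
      calc f i * r i ≤ f i * |r i| := mul_le_mul_of_nonneg_left (le_abs_self _) (hf i).le
        _ ≤ 1 * |r i| := mul_le_mul_of_nonneg_right hfle1 (abs_nonneg _)
        _ = |r i| := one_mul _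
    have h2 : 0 ≤ ∑ i, f i * Real.log (f i / q i) := gibbs_nonneg f q hf hq hfs hqs
    have : 0 ≤ β * ∑ i, f i * Real.log (f i / q i) := mul_nonneg hβ.le h2
    simp only [hF]
    linarith
  -- Lower bound: for each r, c ≤ sup (take p' = p)
  have hsup_ge : ∀ r : ι → ℝ, c ≤ ⨆ p', F r p' := by
    intro r
    refine le_ciSup_of_le (hbdd r) ⟨p, hp, hps⟩ ?_
    simp only [hF, hc]
    ring_nf
    exact le_refl _
  refine le_antisymm ?_ (le_ciInf hsup_ge)
  -- Upper bound: take r* = β log(p/q)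
  refine ciInf_le_of_le ⟨c, fun x ⟨r, hr⟩ => hr ▸ hsup_ge r⟩
    (fun i => β * Real.log (p i / q i)) ?_
  haveI : Nonempty {f : ι → ℝ // (∀ i, 0 < f i) ∧ ∑ i, f i = 1} := ⟨⟨p, hp, hps⟩⟩
  apply ciSup_le
  rintro ⟨f, hf, hfs⟩
  simp only [hF, hc]
  have hkey : ∀ i, Real.log (f i / q i) = Real.log (f i / p i) + Real.log (p i / q i) := by
    intro i
    rw [Real.log_div (hf i).ne' (hq i).ne', Real.log_div (hf i).ne' (hp i).ne',
      Real.log_div (hp i).ne' (hq i).ne']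
    ring
  have hgibbs : 0 ≤ ∑ i, f i * Real.log (f i / p i) := gibbs_nonneg f p hf hp hfs hps
  have hexp : ∑ i, f i * Real.log (f i / q i)
      = ∑ i, f i * Real.log (f i / p i) + ∑ i, f i * Real.log (p i / q i) := by
    rw [← Finset.sum_add_distrib]
    exact Finset.sum_congr rfl fun i _ => by rw [hkey i]; ring
  have hsum1 : ∑ i, f i * (β * Real.log (p i / q i))
      = β * ∑ i, f i * Real.log (p i / q i) := by
    rw [Finset.mul_sum]; exact Finset.sum_congr rfl fun i _ => by ring
  have hsum2 : ∑ i, p i * (β * Real.log (p i / q i))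
      = β * ∑ i, p i * Real.log (p i / q i) := by
    rw [Finset.mul_sum]; exact Finset.sum_congr rfl fun i _ => by ring
  rw [hsum1, hsum2, hexp]
  have : 0 ≤ β * ∑ i, f i * Real.log (f i / p i) := mul_nonneg hβ.le hgibbs
  linarith
end

section
/- (Theorem 1, finite form.) Let E and T be finite nonempty types, let w : E → ℝ be a positive probability vector, let p : E → T → ℝ be such that p e is a positive probability vector on T for every e, let β > 0, and define p̄ t := ∑ e, w e * p e t and post e t := w e * p e t / p̄ t. Then ∑ e, w e * (⨅ (r : T → ℝ), ⨆ (p' : positive probability vector on T), (∑ t, p' t * r t − ∑ t, p e t * r t − β * ∑ t, p' t * Real.log (p' t / p̄ t))) = −β * ∑ e, w e * ∑ t, p e t * Real.log (p e t / p̄ t) = β * ∑ e, w e * ∑ t, p e t * Real.log (w e / post e t). That is, the cross-embodiment pre-training objective U(π, E) equals −β · E_e[KL(p_e ‖ p̄)] = β · E_e E_{τ∼p_e}[log (w(e) / post(e|τ))]. -/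
open Finset Real

private lemma gibbs_aux {T : Type*} [Fintype T] (f g : T → ℝ) (hf : ∀ t, 0 < f t)
    (hg : ∀ t, 0 < g t) (hfs : ∑ t, f t = 1) :
    ∑ t, f t * Real.log (g t / f t) ≤ (∑ t, g t) - 1 := by
  rw [← hfs, ← Finset.sum_sub_distrib]
  apply Finset.sum_le_sum
  intro t _
  have h := Real.log_le_sub_one_of_pos (div_pos (hg t) (hf t))
  calc f t * Real.log (g t / f t) ≤ f t * (g t / f t - 1) :=
        mul_le_mul_of_nonneg_left h (hf t).le
    _ = g t - f t := by
        rw [mul_sub, mul_one, mul_comm (f t), div_mul_cancel₀ _ (hf t).ne']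

private lemma upper_aux {T : Type*} [Fintype T] (β : ℝ) (hβ : 0 < β) (q p' : T → ℝ)
    (hq : ∀ t, 0 < q t) (hp' : ∀ t, 0 < p' t) (h1 : ∑ t, p' t = 1) (r : T → ℝ) :
    ∑ t, p' t * r t - β * ∑ t, p' t * Real.log (p' t / q t)
      ≤ β * ((∑ t, q t * Real.exp (r t / β)) - 1) := by
  have hg : ∀ t, 0 < q t * Real.exp (r t / β) := fun t => mul_pos (hq t) (Real.exp_pos _)
  have hG := gibbs_aux p' (fun t => q t * Real.exp (r t / β)) hp' hg h1
  have key : ∑ t, p' t * Real.log (q t * Real.exp (r t / β) / p' t)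
      = (∑ t, p' t * r t) / β - ∑ t, p' t * Real.log (p' t / q t) := by
    rw [Finset.sum_div, ← Finset.sum_sub_distrib]
    apply Finset.sum_congr rfl; intro t _
    rw [Real.log_div (mul_pos (hq t) (Real.exp_pos _)).ne' (hp' t).ne', Real.log_mul (hq t).ne'
        (Real.exp_pos _).ne', Real.log_exp, Real.log_div (hp' t).ne' (hq t).ne']
    ring
  rw [key] at hG
  calc ∑ t, p' t * r t - β * ∑ t, p' t * Real.log (p' t / q t)
      = β * ((∑ t, p' t * r t) / β - ∑ t, p' t * Real.log (p' t / q t)) := by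
        field_simp
    _ ≤ β * ((∑ t, q t * Real.exp (r t / β)) - 1) :=
        mul_le_mul_of_nonneg_left hG hβ.le

/-- Theorem 1, finite form: the cross-embodiment pre-training objective equals
`−β · E_e[KL(p_e ‖ p̄)]`, which equals `β · E_e E_{τ∼p_e}[log(w(e)/post(e|τ))]`. -/
theorem theorem1_finite {E T : Type*}
    [Fintype E] [Nonempty E] [Fintype T] [Nonempty T]
    (w : E → ℝ) (hw : ∀ e, 0 < w e) (hws : ∑ e, w e = 1)
    (p : E → T → ℝ) (hp : ∀ e t, 0 < p e t) (hps : ∀ e, ∑ t, p e t = 1)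
    (β : ℝ) (hβ : 0 < β)
    (pbar : T → ℝ) (hpbar : ∀ t, pbar t = ∑ e, w e * p e t)
    (post : E → T → ℝ) (hpost : ∀ e t, post e t = w e * p e t / pbar t) :
    (∑ e, w e *
      (⨅ r : T → ℝ, ⨆ p' : {f : T → ℝ // (∀ t, 0 < f t) ∧ ∑ t, f t = 1},
        (∑ t, (p' : T → ℝ) t * r t - ∑ t, p e t * r t
          - β * ∑ t, (p' : T → ℝ) t * Real.log ((p' : T → ℝ) t / pbar t)))
      = -β * ∑ e, w e * ∑ t, p e t * Real.log (p e t / pbar t)) ∧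
    (-β * ∑ e, w e * ∑ t, p e t * Real.log (p e t / pbar t)
      = β * ∑ e, w e * ∑ t, p e t * Real.log (w e / post e t)) := by
  have hpbar_pos : ∀ t, 0 < pbar t := by
    intro t
    rw [hpbar]
    exact Finset.sum_pos (fun e _ => mul_pos (hw e) (hp e t)) Finset.univ_nonempty
  constructor
  · -- first equality
    have hmain : ∀ e,
        (⨅ r : T → ℝ, ⨆ p' : {f : T → ℝ // (∀ t, 0 < f t) ∧ ∑ t, f t = 1},
          (∑ t, (p' : T → ℝ) t * r t - ∑ t, p e t * r t
            - β * ∑ t, (p' : T → ℝ) t * Real.log ((p' : T → ℝ) t / pbar t)))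
        = -(β * ∑ t, p e t * Real.log (p e t / pbar t)) := by
      intro e
      set KL : ℝ := ∑ t, p e t * Real.log (p e t / pbar t) with hKL
      haveI : Nonempty {f : T → ℝ // (∀ t, 0 < f t) ∧ ∑ t, f t = 1} :=
        ⟨⟨p e, fun t => hp e t, hps e⟩⟩
      set F : (T → ℝ) → {f : T → ℝ // (∀ t, 0 < f t) ∧ ∑ t, f t = 1} → ℝ :=
        fun r p' => ∑ t, (p' : T → ℝ) t * r t - ∑ t, p e t * r t
          - β * ∑ t, (p' : T → ℝ) t * Real.log ((p' : T → ℝ) t / pbar t) with hF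
      have hub : ∀ r p', F r p' ≤ β * ((∑ t, pbar t * Real.exp (r t / β)) - 1)
          - ∑ t, p e t * r t := by
        intro r p'
        have := upper_aux β hβ pbar (p' : T → ℝ) hpbar_pos p'.2.1 p'.2.2 r
        simp only [hF]
        linarith
      have hbdd : ∀ r, BddAbove (Set.range (F r)) := by
        intro r
        exact ⟨_, by rintro _ ⟨p', rfl⟩; exact hub r p'⟩
      have hpe : ∀ r, F r ⟨p e, fun t => hp e t, hps e⟩ = -(β * KL) := by
        intro r; simp only [hF]; ring
      have hlow : ∀ r, -(β * KL) ≤ ⨆ p', F r p' := by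
        intro r
        rw [← hpe r]
        exact le_ciSup (hbdd r) _
      set rstar : T → ℝ := fun t => β * Real.log (p e t / pbar t) with hrstar
      have hZ : (∑ t, pbar t * Real.exp (rstar t / β)) = 1 := by
        rw [← hps e]
        apply Finset.sum_congr rfl
        intro t _
        rw [hrstar]
        rw [mul_div_cancel_left₀ _ hβ.ne',
          Real.exp_log (div_pos (hp e t) (hpbar_pos t)),
          mul_comm, div_mul_cancel₀ _ (hpbar_pos t).ne']
      have hsumr : ∑ t, p e t * rstar t = β * KL := by
        rw [hKL, Finset.mul_sum]
        apply Finset.sum_congr rfl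
        intro t _
        simp only [hrstar]; ring
      have hupper : (⨆ p', F rstar p') ≤ -(β * KL) := by
        apply ciSup_le
        intro p'
        have := hub rstar p'
        rw [hZ, hsumr] at this
        linarith
      have hbddb : BddBelow (Set.range (fun r => ⨆ p', F r p')) :=
        ⟨-(β * KL), by rintro _ ⟨r, rfl⟩; exact hlow r⟩
      apply le_antisymm
      · exact le_trans (ciInf_le hbddb rstar) hupper
      · exact le_ciInf hlow
    calc ∑ e, w e * _ = ∑ e, w e * (-(β * ∑ t, p e t * Real.log (p e t / pbar t))) :=
          Finset.sum_congr rfl (fun e _ => by rw [hmain e])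
      _ = -β * ∑ e, w e * ∑ t, p e t * Real.log (p e t / pbar t) := by
          rw [neg_mul, Finset.mul_sum, ← Finset.sum_neg_distrib]
          apply Finset.sum_congr rfl
          intro e _; ring
  · -- second equality
    have : ∀ e, ∑ t, p e t * Real.log (w e / post e t)
        = -∑ t, p e t * Real.log (p e t / pbar t) := by
      intro e
      rw [← Finset.sum_neg_distrib]
      apply Finset.sum_congr rfl
      intro t _
      have h1 : w e / post e t = pbar t / p e t := by
        rw [hpost]
        rw [div_div_eq_mul_div, mul_comm (w e) (pbar t), mul_div_assoc,
          div_mul_eq_div_div, div_self (hw e).ne', mul_one_div]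
      rw [h1, Real.log_div (hpbar_pos t).ne' (hp e t).ne',
        Real.log_div (hp e t).ne' (hpbar_pos t).ne']
      ring
    have h2 : ∑ e, w e * ∑ t, p e t * Real.log (w e / post e t)
        = ∑ e, w e * (-∑ t, p e t * Real.log (p e t / pbar t)) :=
      Finset.sum_congr rfl (fun e _ => by rw [this e])
    rw [h2]
    simp only [mul_neg, Finset.sum_neg_distrib]
    ring
end

section
/- Let T and Z be finite nonempty types, let q be a positive probability vector on T, let P : Z → T → ℝ be such that P z is a positive probability vector on T for every z, and let β > 0. Then ⨅ (r : T → ℝ), ⨆ (p' : positive probability vector on T), (∑ t, p' t * r t − (⨆ z, ∑ t, P z t * r t) − β * ∑ t, p' t * Real.log (p' t / q t)) = −β * ⨆ z, ∑ t, P z t * Real.log (P z t / q t). That is, the skill-based min–max fine-tuning objective, minimized over reward functions and maximized over fine-tuned distributions, equals −β times the maximal KL divergence of a skill-conditioned trajectory distribution from the reference q. (Core min–max identity for the cross-embodiment skill-based adaptation objective, Appendix A.3.) -/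
/-- Gibbs' inequality: `∑ p log (a/p) ≤ 0` for positive probability vectors. -/
lemma gibbs_aux_s8 {T : Type*} [Fintype T] (p a : T → ℝ)
    (hp : ∀ t, 0 < p t) (ha : ∀ t, 0 < a t)
    (hps : ∑ t, p t = 1) (has : ∑ t, a t = 1) :
    ∑ t, p t * Real.log (a t / p t) ≤ 0 := by
  have h : ∀ t, p t * Real.log (a t / p t) ≤ a t - p t := by
    intro t
    have hlog := Real.log_le_sub_one_of_pos (div_pos (ha t) (hp t))
    calc p t * Real.log (a t / p t) ≤ p t * (a t / p t - 1) :=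
          mul_le_mul_of_nonneg_left hlog (hp t).le
      _ = a t - p t := by rw [mul_sub, mul_one, mul_div_cancel₀ _ (hp t).ne']
  calc ∑ t, p t * Real.log (a t / p t) ≤ ∑ t, (a t - p t) :=
        Finset.sum_le_sum fun t _ => h t
    _ = 0 := by rw [Finset.sum_sub_distrib, hps, has]; ring

/-- KL nonnegativity. -/
lemma kl_nonneg_aux {T : Type*} [Fintype T] (p a : T → ℝ)
    (hp : ∀ t, 0 < p t) (ha : ∀ t, 0 < a t)
    (hps : ∑ t, p t = 1) (has : ∑ t, a t = 1) :
    0 ≤ ∑ t, p t * Real.log (p t / a t) := by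
  have h := gibbs_aux_s8 p a hp ha hps has
  have : ∑ t, p t * Real.log (a t / p t) = -∑ t, p t * Real.log (p t / a t) := by
    rw [← Finset.sum_neg_distrib]
    refine Finset.sum_congr rfl fun t _ => ?_
    rw [Real.log_div (ha t).ne' (hp t).ne', Real.log_div (hp t).ne' (ha t).ne']
    ring
  linarith [this ▸ h]

/-- Core min–max identity for the skill-based adaptation objective: the min over
rewards of the max over fine-tuned distributions of the skill-based objective equals
`−β` times the maximal KL divergence of a skill-conditioned distribution from `q`. -/
theorem skill_minmax_eq_neg_beta_sup_KL {T Z : Type*}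
    [Fintype T] [Nonempty T] [Fintype Z] [Nonempty Z]
    (q : T → ℝ) (hq : ∀ t, 0 < q t) (hqs : ∑ t, q t = 1)
    (P : Z → T → ℝ) (hP : ∀ z t, 0 < P z t) (hPs : ∀ z, ∑ t, P z t = 1)
    (β : ℝ) (hβ : 0 < β) :
    (⨅ r : T → ℝ, ⨆ p' : {f : T → ℝ // (∀ t, 0 < f t) ∧ ∑ t, f t = 1},
      (∑ t, (p' : T → ℝ) t * r t - (⨆ z, ∑ t, P z t * r t)
        - β * ∑ t, (p' : T → ℝ) t * Real.log ((p' : T → ℝ) t / q t)))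
    = -β * ⨆ z, ∑ t, P z t * Real.log (P z t / q t) := by
  haveI : Nonempty {f : T → ℝ // (∀ t, 0 < f t) ∧ ∑ t, f t = 1} := ⟨⟨q, hq, hqs⟩⟩
  set KL : Z → ℝ := fun z => ∑ t, P z t * Real.log (P z t / q t) with hKL
  set M : ℝ := ⨆ z, KL z with hM
  have hKLM : ∀ z, KL z ≤ M := fun z =>
    le_ciSup (Set.finite_range KL).bddAbove z
  set G : (T → ℝ) → {f : T → ℝ // (∀ t, 0 < f t) ∧ ∑ t, f t = 1} → ℝ :=
    fun r p' => ∑ t, (p' : T → ℝ) t * r t - (⨆ z, ∑ t, P z t * r t)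
        - β * ∑ t, (p' : T → ℝ) t * Real.log ((p' : T → ℝ) t / q t) with hG
  -- Boundedness above of the inner sup, for every r
  have hbdd : ∀ r : T → ℝ, BddAbove (Set.range (G r)) := by
    intro r
    refine ⟨(⨆ t, r t) - (⨆ z, ∑ t, P z t * r t), ?_⟩
    rintro x ⟨p', rfl⟩
    obtain ⟨hp'pos, hp's⟩ := p'.2
    have h1 : ∑ t, (p' : T → ℝ) t * r t ≤ ⨆ t, r t := by
      calc ∑ t, (p' : T → ℝ) t * r t ≤ ∑ t, (p' : T → ℝ) t * (⨆ t', r t') :=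
            Finset.sum_le_sum fun t _ => mul_le_mul_of_nonneg_left
              (le_ciSup (Set.finite_range r).bddAbove t) (hp'pos t).le
        _ = ⨆ t', r t' := by rw [← Finset.sum_mul, hp's, one_mul]
    have h2 : 0 ≤ β * ∑ t, (p' : T → ℝ) t * Real.log ((p' : T → ℝ) t / q t) :=
      mul_nonneg hβ.le (kl_nonneg_aux _ q hp'pos hq hp's hqs)
    simp only [hG]
    linarith
  -- Uniform lower bound: for all r, -β*M ≤ sup_{p'} G r p'
  have hlow : ∀ r : T → ℝ, -β * M ≤ ⨆ p', G r p' := by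
    intro r
    obtain ⟨z₀, hz₀⟩ := Finite.exists_max (fun z => ∑ t, P z t * r t)
    have hsup : (⨆ z, ∑ t, P z t * r t) = ∑ t, P z₀ t * r t :=
      le_antisymm (ciSup_le hz₀)
        (le_ciSup (f := fun z => ∑ t, P z t * r t) (Set.finite_range _).bddAbove z₀)
    set p' : {f : T → ℝ // (∀ t, 0 < f t) ∧ ∑ t, f t = 1} :=
      ⟨P z₀, hP z₀, hPs z₀⟩ with hp'
    have hval : G r p' = -β * KL z₀ := by
      simp only [hG, hp', hsup, hKL]
      ring
    have : -β * M ≤ G r p' := by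
      rw [hval]
      have := hKLM z₀
      nlinarith
    exact this.trans (le_ciSup (hbdd r) p')
  -- Now the equality:
  refine le_antisymm ?_ (le_ciInf hlow)
  -- pick z₀ maximizing KL, and r₀ the corresponding reward
  obtain ⟨z₀, hz₀⟩ := Finite.exists_max KL
  have hMz₀ : M = KL z₀ :=
    le_antisymm (ciSup_le hz₀) (le_ciSup (Set.finite_range KL).bddAbove z₀)
  set r₀ : T → ℝ := fun t => β * Real.log (P z₀ t / q t) with hr₀
  have hinfbdd : BddBelow (Set.range fun r => ⨆ p', G r p') := by
    refine ⟨-β * M, ?_⟩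
    rintro x ⟨r, rfl⟩
    exact hlow r
  refine (ciInf_le hinfbdd r₀).trans ?_
  refine ciSup_le fun p' => ?_
  obtain ⟨hp'pos, hp's⟩ := p'.2
  have hsupz : β * KL z₀ ≤ ⨆ z, ∑ t, P z t * r₀ t := by
    have : ∑ t, P z₀ t * r₀ t = β * KL z₀ := by
      simp only [hr₀, hKL, Finset.mul_sum]
      exact Finset.sum_congr rfl fun t _ => by ring
    exact this ▸ le_ciSup (f := fun z => ∑ t, P z t * r₀ t) (Set.finite_range _).bddAbove z₀
  have hgibbs : ∑ t, (p' : T → ℝ) t * Real.log (P z₀ t / (p' : T → ℝ) t) ≤ 0 :=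
    gibbs_aux_s8 _ (P z₀) hp'pos (hP z₀) hp's (hPs z₀)
  have hkey : ∑ t, (p' : T → ℝ) t * r₀ t
      - β * ∑ t, (p' : T → ℝ) t * Real.log ((p' : T → ℝ) t / q t)
      = β * ∑ t, (p' : T → ℝ) t * Real.log (P z₀ t / (p' : T → ℝ) t) := by
    simp only [hr₀, Finset.mul_sum, ← Finset.sum_sub_distrib]
    refine Finset.sum_congr rfl fun t _ => ?_
    rw [Real.log_div (hP z₀ t).ne' (hq t).ne', Real.log_div (hp'pos t).ne' (hq t).ne',
      Real.log_div (hP z₀ t).ne' (hp'pos t).ne']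
    ring
  have : G r₀ p' ≤ β * ∑ t, (p' : T → ℝ) t * Real.log (P z₀ t / (p' : T → ℝ) t)
      - β * KL z₀ := by
    simp only [hG]
    linarith
  have h2 : β * ∑ t, (p' : T → ℝ) t * Real.log (P z₀ t / (p' : T → ℝ) t) ≤ 0 :=
    mul_nonpos_of_nonneg_of_nonpos hβ.le hgibbs
  rw [hMz₀, neg_mul]
  exact this.trans (by linarith)
end

section
/- (Averaged skill min–max, Eq. (7) first part.) Let E, Z, and T be finite nonempty types, let w : E → ℝ be a positive probability vector, let P : E → Z → T → ℝ be such that P e z is a positive probability vector on T for all e, z, let p̄ be a positive probability vector on T, and let β > 0. Then ∑ e, w e * (⨅ (r : T → ℝ), ⨆ (p' : positive probability vector on T), (∑ t, p' t * r t − (⨆ z, ∑ t, P e z t * r t) − β * ∑ t, p' t * Real.log (p' t / p̄ t))) = −β * ∑ e, w e * ⨆ z, ∑ t, P e z t * Real.log (P e z t / p̄ t). -/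
lemma my_gibbs {T : Type*} [Fintype T] (p q : T → ℝ) (hp : ∀ t, 0 < p t)
    (hps : ∑ t, p t = 1) (hq : ∀ t, 0 < q t) (hqs : ∑ t, q t = 1) :
    ∑ t, p t * Real.log (q t / p t) ≤ 0 := by
  calc ∑ t, p t * Real.log (q t / p t) ≤ ∑ t, p t * (q t / p t - 1) := by
        refine Finset.sum_le_sum fun t _ => ?_
        exact mul_le_mul_of_nonneg_left
          (Real.log_le_sub_one_of_pos (div_pos (hq t) (hp t))) (hp t).le
    _ = ∑ t, (q t - p t) := by
        refine Finset.sum_congr rfl fun t _ => ?_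
        rw [mul_sub, mul_div_cancel₀ _ (hp t).ne', mul_one]
    _ = 0 := by rw [Finset.sum_sub_distrib, hqs, hps]; ring

lemma my_fsup {Z : Type*} [Fintype Z] [Nonempty Z] (f : Z → ℝ) :
    ∃ z0, (⨆ z, f z) = f z0 ∧ ∀ z, f z ≤ f z0 := by
  obtain ⟨z0, h⟩ := Finite.exists_max f
  exact ⟨z0, le_antisymm (ciSup_le h) (le_ciSup (Set.finite_range f).bddAbove z0), h⟩

lemma my_key {Z T : Type*} [Fintype Z] [Nonempty Z] [Fintype T] [Nonempty T]
    (Q : Z → T → ℝ) (hQ : ∀ z t, 0 < Q z t) (hQs : ∀ z, ∑ t, Q z t = 1)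
    (pbar : T → ℝ) (hpbar : ∀ t, 0 < pbar t) (hpbars : ∑ t, pbar t = 1)
    (β : ℝ) (hβ : 0 < β) :
    (⨅ r : T → ℝ, ⨆ p' : {f : T → ℝ // (∀ t, 0 < f t) ∧ ∑ t, f t = 1},
        (∑ t, (p' : T → ℝ) t * r t - (⨆ z, ∑ t, Q z t * r t)
          - β * ∑ t, (p' : T → ℝ) t * Real.log ((p' : T → ℝ) t / pbar t)))
    = -β * ⨆ z, ∑ t, Q z t * Real.log (Q z t / pbar t) := by
  haveI : Nonempty {f : T → ℝ // (∀ t, 0 < f t) ∧ ∑ t, f t = 1} :=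
    ⟨⟨pbar, hpbar, hpbars⟩⟩
  set K : Z → ℝ := fun z => ∑ t, Q z t * Real.log (Q z t / pbar t) with hK
  obtain ⟨z0, hz0eq, hz0⟩ := my_fsup K
  set g : (T → ℝ) → {f : T → ℝ // (∀ t, 0 < f t) ∧ ∑ t, f t = 1} → ℝ :=
    fun r p' => ∑ t, (p' : T → ℝ) t * r t - (⨆ z, ∑ t, Q z t * r t)
      - β * ∑ t, (p' : T → ℝ) t * Real.log ((p' : T → ℝ) t / pbar t) with hg
  -- KL nonneg from mixture: for any positive prob vector p', ∑ p' log(p'/pbar) ≥ 0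
  have hKLnn : ∀ p' : {f : T → ℝ // (∀ t, 0 < f t) ∧ ∑ t, f t = 1},
      0 ≤ ∑ t, (p' : T → ℝ) t * Real.log ((p' : T → ℝ) t / pbar t) := by
    intro p'
    have := my_gibbs (p' : T → ℝ) pbar p'.2.1 p'.2.2 hpbar hpbars
    have heq : ∑ t, (p' : T → ℝ) t * Real.log ((p' : T → ℝ) t / pbar t)
        = -∑ t, (p' : T → ℝ) t * Real.log (pbar t / (p' : T → ℝ) t) := by
      rw [← Finset.sum_neg_distrib]
      refine Finset.sum_congr rfl fun t _ => ?_
      rw [Real.log_div (p'.2.1 t).ne' (hpbar t).ne', Real.log_div (hpbar t).ne' (p'.2.1 t).ne']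
      ring
    rw [heq]; linarith
  -- boundedness above of g r
  have hbdd : ∀ r : T → ℝ, BddAbove (Set.range (g r)) := by
    intro r
    obtain ⟨t0, _, ht0⟩ := my_fsup r
    refine ⟨r t0 - (⨆ z, ∑ t, Q z t * r t), ?_⟩
    rintro x ⟨p', rfl⟩
    have h1 : ∑ t, (p' : T → ℝ) t * r t ≤ r t0 := by
      calc ∑ t, (p' : T → ℝ) t * r t ≤ ∑ t, (p' : T → ℝ) t * r t0 :=
            Finset.sum_le_sum fun t _ =>
              mul_le_mul_of_nonneg_left (ht0 t) (p'.2.1 t).le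
        _ = r t0 := by rw [← Finset.sum_mul, p'.2.2, one_mul]
    have h2 := hKLnn p'
    simp only [hg]
    nlinarith
  -- lower bound: for every r, -β * K z0 ≤ ⨆ p', g r p'
  have hlow : ∀ r : T → ℝ, -β * K z0 ≤ ⨆ p', g r p' := by
    intro r
    obtain ⟨zr, hzreq, hzr⟩ := my_fsup (fun z => ∑ t, Q z t * r t)
    have hval : g r ⟨Q zr, fun t => hQ zr t, hQs zr⟩ = -β * K zr := by
      simp only [hg, hK, hzreq]; ring
    have : -β * K z0 ≤ g r ⟨Q zr, fun t => hQ zr t, hQs zr⟩ := by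
      rw [hval]
      have := hz0 zr
      nlinarith
    exact this.trans (le_ciSup (hbdd r) _)
  -- upper bound at r0
  set r0 : T → ℝ := fun t => β * Real.log (Q z0 t / pbar t) with hr0
  have hupp : (⨆ p', g r0 p') ≤ -β * K z0 := by
    refine ciSup_le fun p' => ?_
    have hS : β * K z0 ≤ ⨆ z, ∑ t, Q z t * r0 t := by
      have : ∑ t, Q z0 t * r0 t = β * K z0 := by
        simp only [hr0, hK, Finset.mul_sum]
        exact Finset.sum_congr rfl fun t _ => by ring
      rw [← this]
      exact le_ciSup (f := fun z => ∑ t, Q z t * r0 t) (Set.finite_range _).bddAbove z0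
    have hmain : ∑ t, (p' : T → ℝ) t * r0 t
        - β * ∑ t, (p' : T → ℝ) t * Real.log ((p' : T → ℝ) t / pbar t) ≤ 0 := by
      have heq : ∑ t, (p' : T → ℝ) t * r0 t
          - β * ∑ t, (p' : T → ℝ) t * Real.log ((p' : T → ℝ) t / pbar t)
          = β * ∑ t, (p' : T → ℝ) t * Real.log (Q z0 t / (p' : T → ℝ) t) := by
        simp only [hr0, Finset.mul_sum, ← Finset.sum_sub_distrib]
        refine Finset.sum_congr rfl fun t _ => ?_
        rw [Real.log_div (hQ z0 t).ne' (hpbar t).ne',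
          Real.log_div (p'.2.1 t).ne' (hpbar t).ne',
          Real.log_div (hQ z0 t).ne' (p'.2.1 t).ne']
        ring
      rw [heq]
      have := my_gibbs (p' : T → ℝ) (Q z0) p'.2.1 p'.2.2 (hQ z0) (hQs z0)
      nlinarith
    simp only [hg]
    linarith
  -- conclude
  have hBdB : BddBelow (Set.range fun r => ⨆ p', g r p') :=
    ⟨-β * K z0, by rintro x ⟨r, rfl⟩; exact hlow r⟩
  rw [hz0eq]
  refine le_antisymm ((ciInf_le hBdB r0).trans hupp) (le_ciInf hlow)

/-- Averaged skill min–max (Eq. (7), first part): averaging the skill-based min–max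
fine-tuning objective over embodiments equals `−β` times the average over embodiments
of the maximal skill-conditioned KL divergence from the mixture `p̄`. -/
theorem averaged_skill_minmax {E Z T : Type*}
    [Fintype E] [Nonempty E] [Fintype Z] [Nonempty Z] [Fintype T] [Nonempty T]
    (w : E → ℝ) (hw : ∀ e, 0 < w e) (hws : ∑ e, w e = 1)
    (P : E → Z → T → ℝ) (hP : ∀ e z t, 0 < P e z t) (hPs : ∀ e z, ∑ t, P e z t = 1)
    (pbar : T → ℝ) (hpbar : ∀ t, 0 < pbar t) (hpbars : ∑ t, pbar t = 1)
    (β : ℝ) (hβ : 0 < β) :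
    ∑ e, w e *
      (⨅ r : T → ℝ, ⨆ p' : {f : T → ℝ // (∀ t, 0 < f t) ∧ ∑ t, f t = 1},
        (∑ t, (p' : T → ℝ) t * r t - (⨆ z, ∑ t, P e z t * r t)
          - β * ∑ t, (p' : T → ℝ) t * Real.log ((p' : T → ℝ) t / pbar t)))
    = -β * ∑ e, w e * ⨆ z, ∑ t, P e z t * Real.log (P e z t / pbar t) := by
  rw [Finset.mul_sum]
  refine Finset.sum_congr rfl fun e _ => ?_
  rw [my_key (P e) (hP e) (hPs e) pbar hpbar hpbars β hβ]
  ring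
end

section
/- Let q : ℕ → ℝ satisfy q 0 = 1/2 and q (t+1) = 1/2 − q t / 2 for all t, and let γ be a real number with 0 ≤ γ < 1. Then (1 − γ) * ∑' t, γ^t * q t = 1/(2 + γ) and (1 − γ) * ∑' t, γ^t * (1 − q t) = (1 + γ)/(2 + γ). (Computation of the discounted state distribution ρ_{2,π} of the stochastic policy under embodiment e₂ in the Appendix A.1 counterexample.) -/
/-- Discounted state distribution of the stochastic policy under embodiment `e₂`
in the Appendix A.1 counterexample. -/
theorem discounted_occupancy_e2 (q : ℕ → ℝ)
    (h0 : q 0 = 1 / 2) (hrec : ∀ t, q (t + 1) = 1 / 2 - q t / 2)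
    (γ : ℝ) (hγ0 : 0 ≤ γ) (hγ1 : γ < 1) :
    (1 - γ) * ∑' t, γ ^ t * q t = 1 / (2 + γ) ∧
    (1 - γ) * ∑' t, γ ^ t * (1 - q t) = (1 + γ) / (2 + γ) := by
  have hq : ∀ t, q t = 1/3 + (1/6) * (-(1/2) : ℝ)^t := by
    intro t
    induction t with
    | zero => rw [h0]; norm_num
    | succ n ih => rw [hrec, ih]; ring
  have hne1 : (1 : ℝ) - γ ≠ 0 := by linarith
  have hne2 : (2 : ℝ) + γ ≠ 0 := by linarith
  have h1 : Summable (fun t : ℕ => γ^t) := summable_geometric_of_lt_one hγ0 hγ1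
  have h2 : Summable (fun t : ℕ => (-(γ/2))^t) := by
    apply summable_geometric_of_norm_lt_one
    rw [norm_neg, Real.norm_eq_abs, abs_of_nonneg (by linarith)]
    linarith
  have key : ∀ t : ℕ, γ^t * q t = (1/3) * γ^t + (1/6) * (-(γ/2))^t := by
    intro t
    have h3 : (-(γ/2))^t = γ^t * (-(1/2):ℝ)^t := by
      rw [← mul_pow]; ring_nf
    rw [hq t, h3]; ring
  have S1 : ∑' t, γ^t * q t = (1/3) * (1-γ)⁻¹ + (1/6) * (1 - (-(γ/2)))⁻¹ := by
    rw [tsum_congr key, Summable.tsum_add ((h1.mul_left _)) (h2.mul_left _),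
      tsum_mul_left, tsum_mul_left, tsum_geometric_of_lt_one hγ0 hγ1,
      tsum_geometric_of_norm_lt_one (by
        rw [norm_neg, Real.norm_eq_abs, abs_of_nonneg (by linarith)]; linarith)]
  have hsumq : Summable (fun t : ℕ => γ^t * q t) := by
    rw [show (fun t : ℕ => γ^t * q t) = fun t => (1/3) * γ^t + (1/6) * (-(γ/2))^t
      from funext key]
    exact (h1.mul_left _).add (h2.mul_left _)
  have first : (1 - γ) * ∑' t, γ ^ t * q t = 1 / (2 + γ) := by
    rw [S1]
    have : (1 : ℝ) - -(γ/2) ≠ 0 := by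
      have : (0:ℝ) < 1 + γ/2 := by linarith
      intro h; rw [sub_neg_eq_add] at h; linarith
    rw [sub_neg_eq_add] at this ⊢
    field_simp
    ring
  refine ⟨first, ?_⟩
  have split : ∑' t, γ ^ t * (1 - q t) = (∑' t : ℕ, γ^t) - ∑' t, γ^t * q t := by
    rw [← Summable.tsum_sub h1 hsumq]
    exact tsum_congr fun t => by ring
  rw [split, mul_sub, tsum_geometric_of_lt_one hγ0 hγ1, first,
    mul_inv_cancel₀ hne1]
  field_simp
  ring
end
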